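/- In a resolvable transversal design TD(q-1,q), let P = {p1, p2, p3} be three points lying in three different groups. For any set R of blocks, at most three parallel classes each contribute q-2 blocks to R none of which contains a point of P. -/

import Mathlib

/-- A transversal design TD(ℓ,h): points `α`, `ℓ` groups of size `h`, blocks of size `ℓ`
meeting each group in exactly one point, every pair of points from different groups in
exactly one block. -/
structure TD (α : Type) [DecidableEq α] [Fintype α] (ℓ h : ℕ) where
  groups : Finset (Finset α)
  blocks : Finset (Finset α)
  card_points : Fintype.card α = ℓ * h
  groups_card : groups.card = ℓ
  group_size : ∀ G ∈ groups, G.card = h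
  groups_partition : ∀ x : α, ∃! G, G ∈ groups ∧ x ∈ G
  block_size : ∀ B ∈ blocks, B.card = ℓ
  block_meets_group : ∀ B ∈ blocks, ∀ G ∈ groups, (B ∩ G).card = 1
  pair_unique : ∀ x y : α, x ≠ y → (∀ G ∈ groups, ¬(x ∈ G ∧ y ∈ G)) →
    ∃! B, B ∈ blocks ∧ x ∈ B ∧ y ∈ B

/-- A resolvable transversal design: the blocks are partitioned into `h` parallel
classes of `h` pairwise disjoint blocks, each class covering every point exactly once. -/
structure RTD (α : Type) [DecidableEq α] [Fintype α] (ℓ h : ℕ) extends TD α ℓ h where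
  classes : Finset (Finset (Finset α))
  classes_card : classes.card = h
  class_sub : ∀ C ∈ classes, C ⊆ blocks
  class_card : ∀ C ∈ classes, C.card = h
  class_cover : ∀ C ∈ classes, ∀ x : α, ∃! B, B ∈ C ∧ x ∈ B
  block_class : ∀ B ∈ blocks, ∃! C, C ∈ classes ∧ B ∈ C

/-- In a resolvable TD(q-1,q), let p1, p2, p3 be three points lying in
three different groups. For any set R of blocks, at most three parallel classes each
contribute q-2 blocks to R none of which contains any of p1, p2, p3. -/
theorem stmt_5 {α : Type} [DecidableEq α] [Fintype α] (q : ℕ) (hq : 3 ≤ q)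
    (D : RTD α (q - 1) q)
    (p1 p2 p3 : α)
    (hgroups : ∃ G1 ∈ D.groups, ∃ G2 ∈ D.groups, ∃ G3 ∈ D.groups,
      G1 ≠ G2 ∧ G1 ≠ G3 ∧ G2 ≠ G3 ∧ p1 ∈ G1 ∧ p2 ∈ G2 ∧ p3 ∈ G3)
    (R : Finset (Finset α)) (hR : R ⊆ D.blocks) :
    (D.classes.filter (fun C =>
      q - 2 ≤ (C.filter (fun B => B ∈ R ∧ p1 ∉ B ∧ p2 ∉ B ∧ p3 ∉ B)).card)).card ≤ 3 := by
  classical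
  obtain ⟨G1, hG1, G2, hG2, G3, hG3, h12, h13, h23, hp1, hp2, hp3⟩ := hgroups
  have hsep : ∀ (x y : α) (Gx Gy : Finset α), Gx ∈ D.groups → Gy ∈ D.groups → Gx ≠ Gy →
      x ∈ Gx → y ∈ Gy → x ≠ y ∧ ∀ G ∈ D.groups, ¬(x ∈ G ∧ y ∈ G) := by
    intro x y Gx Gy hGx hGy hne hx hy
    constructor
    · rintro rfl
      obtain ⟨G, hG, hu⟩ := D.groups_partition x
      exact hne ((hu Gx ⟨hGx, hx⟩).trans (hu Gy ⟨hGy, hy⟩).symm)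
    · rintro G hG ⟨hxG, hyG⟩
      obtain ⟨Gx', _, hux⟩ := D.groups_partition x
      obtain ⟨Gy', _, huy⟩ := D.groups_partition y
      exact hne (((hux Gx ⟨hGx, hx⟩).trans (hux G ⟨hG, hxG⟩).symm).trans
        ((huy G ⟨hG, hyG⟩).trans (huy Gy ⟨hGy, hy⟩).symm))
  have h12' := hsep p1 p2 G1 G2 hG1 hG2 h12 hp1 hp2
  have h13' := hsep p1 p3 G1 G3 hG1 hG3 h13 hp1 hp3
  have h23' := hsep p2 p3 G2 G3 hG2 hG3 h23 hp2 hp3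
  set S := D.classes.filter (fun C =>
      q - 2 ≤ (C.filter (fun B => B ∈ R ∧ p1 ∉ B ∧ p2 ∉ B ∧ p3 ∉ B)).card) with hS
  -- uniqueness of the class containing a block through a given separated pair
  have uniq : ∀ (x y : α), x ≠ y → (∀ G ∈ D.groups, ¬(x ∈ G ∧ y ∈ G)) →
      ∀ C ∈ D.classes, ∀ C' ∈ D.classes,
      (∃ B ∈ C, x ∈ B ∧ y ∈ B) → (∃ B ∈ C', x ∈ B ∧ y ∈ B) → C = C' := by
    rintro x y hxy hg C hC C' hC' ⟨B, hBC, hBx, hBy⟩ ⟨B', hB'C, hB'x, hB'y⟩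
    obtain ⟨B0, hB0, hu⟩ := D.pair_unique x y hxy hg
    have hB : B = B0 := hu B ⟨D.class_sub C hC hBC, hBx, hBy⟩
    have hB' : B' = B0 := hu B' ⟨D.class_sub C' hC' hB'C, hB'x, hB'y⟩
    obtain ⟨C0, _, hcu⟩ := D.block_class B0 hB0.1
    exact (hcu C ⟨hC, hB ▸ hBC⟩).trans (hcu C' ⟨hC', hB' ▸ hB'C⟩).symm
  -- each class in S contains a block through two of the three points
  have key : ∀ C ∈ S, (∃ B ∈ C, p1 ∈ B ∧ p2 ∈ B) ∨ (∃ B ∈ C, p1 ∈ B ∧ p3 ∈ B) ∨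
      (∃ B ∈ C, p2 ∈ B ∧ p3 ∈ B) := by
    intro C hC
    rw [hS, Finset.mem_filter] at hC
    obtain ⟨hCcl, hCcard⟩ := hC
    obtain ⟨B1, ⟨hB1C, hB1p⟩, _⟩ := D.class_cover C hCcl p1
    obtain ⟨B2, ⟨hB2C, hB2p⟩, _⟩ := D.class_cover C hCcl p2
    obtain ⟨B3, ⟨hB3C, hB3p⟩, _⟩ := D.class_cover C hCcl p3
    set F := C.filter (fun B => B ∈ R ∧ p1 ∉ B ∧ p2 ∉ B ∧ p3 ∉ B) with hF
    have hFC : F ⊆ C := Finset.filter_subset _ _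
    have hcard : (C \ F).card ≤ 2 := by
      have h1 := Finset.card_sdiff_of_subset hFC
      rw [h1, D.class_card C hCcl]
      omega
    have hB1m : B1 ∈ C \ F := by
      simp only [hF, Finset.mem_sdiff, Finset.mem_filter]
      exact ⟨hB1C, fun h => h.2.2.1 hB1p⟩
    have hB2m : B2 ∈ C \ F := by
      simp only [hF, Finset.mem_sdiff, Finset.mem_filter]
      exact ⟨hB2C, fun h => h.2.2.2.1 hB2p⟩
    have hB3m : B3 ∈ C \ F := by
      simp only [hF, Finset.mem_sdiff, Finset.mem_filter]
      exact ⟨hB3C, fun h => h.2.2.2.2 hB3p⟩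
    by_contra hcon
    push_neg at hcon
    obtain ⟨hc1, hc2, hc3⟩ := hcon
    have hne12 : B1 ≠ B2 := fun h => hc1 B1 hB1C hB1p (h ▸ hB2p)
    have hne13 : B1 ≠ B3 := fun h => hc2 B1 hB1C hB1p (h ▸ hB3p)
    have hne23 : B2 ≠ B3 := fun h => hc3 B2 hB2C hB2p (h ▸ hB3p)
    have hsub : ({B1, B2, B3} : Finset (Finset α)) ⊆ C \ F := by
      intro B hB
      simp only [Finset.mem_insert, Finset.mem_singleton] at hB
      rcases hB with rfl | rfl | rfl <;> assumption
    have h3 : ({B1, B2, B3} : Finset (Finset α)).card = 3 := by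
      rw [Finset.card_insert_of_notMem (by simp [hne12, hne13]),
        Finset.card_insert_of_notMem (by simp [hne23]), Finset.card_singleton]
    have := Finset.card_le_card hsub
    omega
  -- map each class in S to one of three pair-indices, injectively
  have hle : S.card ≤ ({0, 1, 2} : Finset (Fin 3)).card := by
    apply Finset.card_le_card_of_injOn (fun C =>
      if ∃ B ∈ C, p1 ∈ B ∧ p2 ∈ B then (0 : Fin 3)
      else if ∃ B ∈ C, p1 ∈ B ∧ p3 ∈ B then 1 else 2)
    · intro C _
      dsimp only
      split_ifs <;> simp
    · intro C hC C' hC' hf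
      have hCcl : C ∈ D.classes := (Finset.mem_filter.mp hC).1
      have hC'cl : C' ∈ D.classes := (Finset.mem_filter.mp hC').1
      by_cases h1 : ∃ B ∈ C, p1 ∈ B ∧ p2 ∈ B <;>
      by_cases h2 : ∃ B ∈ C', p1 ∈ B ∧ p2 ∈ B <;>
      by_cases h3 : ∃ B ∈ C, p1 ∈ B ∧ p3 ∈ B <;>
      by_cases h4 : ∃ B ∈ C', p1 ∈ B ∧ p3 ∈ B <;>
      simp only [h1, h2, h3, h4, if_true, if_false] at hf <;>
      first
      | exact absurd hf (by decide)
      | exact uniq p1 p2 h12'.1 h12'.2 C hCcl C' hC'cl h1 h2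
      | exact uniq p1 p3 h13'.1 h13'.2 C hCcl C' hC'cl h3 h4
      | · have hQ : ∃ B ∈ C, p2 ∈ B ∧ p3 ∈ B := by
            rcases key C hC with h | h | h
            · exact absurd h h1
            · exact absurd h h3
            · exact h
          have hQ' : ∃ B ∈ C', p2 ∈ B ∧ p3 ∈ B := by
            rcases key C' hC' with h | h | h
            · exact absurd h h2
            · exact absurd h h4
            · exact h
          exact uniq p2 p3 h23'.1 h23'.2 C hCcl C' hC'cl hQ hQ'
  simpa using hle
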